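/- Let G be a finite group acting 2-transitively on a finite set X with |X| ≥ 2, inducing the permutation representation ρ on ℓ²(X) given by (ρ(g)ψ)_x = ψ_{g⁻¹·x}. Fix a nonzero vector f = (f_x)_{x∈X} ∈ ℓ²(X). Then {ρ(g)f : g ∈ G} is a tight frame for ℓ²(X) if and only if |Σ_{x∈X} f_x|² = Σ_{x∈X} |f_x|². -/

import Mathlib

theorem two_transitive_orbit_tight_frame_iff
    {G X : Type*} [Group G] [Fintype G] [Fintype X] [MulAction G X]
    (hcard : 2 ≤ Fintype.card X)
    (h2 : ∀ x y w z : X, x ≠ y → w ≠ z → ∃ g : G, g • x = w ∧ g • y = z)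
    (f : EuclideanSpace ℂ X) (hf : f ≠ 0) :
    (∃ A : ℝ, 0 < A ∧ ∀ h : EuclideanSpace ℂ X,
        ∑ g : G, ‖(inner ℂ h (WithLp.toLp 2 (fun x => f (g⁻¹ • x)) : EuclideanSpace ℂ X) : ℂ)‖ ^ 2
          = A * ‖h‖ ^ 2)
      ↔ ‖∑ x : X, f x‖ ^ 2 = ∑ x : X, ‖f x‖ ^ 2 := by
  classical
  have hn0 : 0 < Fintype.card X := by omega
  obtain ⟨x₀⟩ := Fintype.card_pos_iff.mp hn0
  obtain ⟨y₀, hy₀⟩ := Fintype.exists_ne_of_one_lt_card (by omega) x₀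
  set n : ℕ := Fintype.card X with hn
  set m : ℕ := Fintype.card G with hm
  have hm0 : 0 < m := Fintype.card_pos
  set S : ℂ := ∑ x : X, f x with hS
  set T : ℝ := ∑ x : X, Complex.normSq (f x) with hT
  have hRHS : (‖∑ x : X, f x‖ ^ 2 = ∑ x : X, ‖f x‖ ^ 2) ↔ Complex.normSq S = T := by
    rw [hS, hT]
    simp only [Complex.sq_norm]
  have hT0 : 0 < T := by
    have hex : ∃ x, f x ≠ 0 := by
      by_contra hc
      push_neg at hc
      exact hf (PiLp.ext hc)
    obtain ⟨x, hx⟩ := hex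
    have h1 : 0 < Complex.normSq (f x) := Complex.normSq_pos.mpr hx
    have h2' : ∀ y ∈ Finset.univ, (0:ℝ) ≤ Complex.normSq (f y) := fun y _ =>
      Complex.normSq_nonneg _
    calc (0:ℝ) < Complex.normSq (f x) := h1
      _ ≤ T := Finset.single_le_sum h2' (Finset.mem_univ x)
  have hnormsq : ∀ h : EuclideanSpace ℂ X, ‖h‖ ^ 2 = ∑ x : X, Complex.normSq (h x) := by
    intro h
    rw [← inner_self_eq_norm_sq (𝕜 := ℂ)]
    simp [PiLp.inner_apply, RCLike.inner_apply, Complex.normSq_apply, -inner_self_eq_norm_sq_to_K]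
  set K : X → X → ℂ := fun x y => ∑ g : G, f (g⁻¹ • x) * (starRingEnd ℂ) (f (g⁻¹ • y)) with hK
  have hinner : ∀ (h : EuclideanSpace ℂ X) (g : G),
      (inner ℂ h (WithLp.toLp 2 (fun x => f (g⁻¹ • x)) : EuclideanSpace ℂ X) : ℂ)
        = ∑ x : X, (starRingEnd ℂ) (h x) * f (g⁻¹ • x) := by
    intro h g
    simp [PiLp.inner_apply, RCLike.inner_apply]
    exact Finset.sum_congr rfl fun _ _ => mul_comm _ _
  have hmain : ∀ h : EuclideanSpace ℂ X,
      ∑ g : G, ‖(inner ℂ h (WithLp.toLp 2 (fun x => f (g⁻¹ • x)) : EuclideanSpace ℂ X) : ℂ)‖ ^ 2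
        = (∑ x : X, ∑ y : X, (starRingEnd ℂ) (h x) * h y * K x y).re := by
    intro h
    have step1 : ∀ g : G,
        ‖(inner ℂ h (WithLp.toLp 2 (fun x => f (g⁻¹ • x)) : EuclideanSpace ℂ X) : ℂ)‖ ^ 2
          = (∑ x : X, ∑ y : X, (starRingEnd ℂ) (h x) * h y
              * (f (g⁻¹ • x) * (starRingEnd ℂ) (f (g⁻¹ • y)))).re := by
      intro g
      rw [hinner]
      rw [show ∀ z : ℂ, ‖z‖ ^ 2 = (z * (starRingEnd ℂ) z).re from fun z => by
        rw [Complex.mul_conj]; simp [Complex.sq_norm]]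
      congr 1
      rw [map_sum, Finset.sum_mul_sum]
      refine Finset.sum_congr rfl fun x _ => Finset.sum_congr rfl fun y _ => ?_
      simp only [map_mul, RingHomCompTriple.comp_apply, RingHom.id_apply,
        Complex.conj_conj]
      ring
    rw [Finset.sum_congr rfl fun g _ => step1 g, ← Complex.re_sum]
    congr 1
    rw [Finset.sum_comm]
    refine Finset.sum_congr rfl fun x _ => ?_
    rw [Finset.sum_comm]
    refine Finset.sum_congr rfl fun y _ => ?_
    rw [← Finset.mul_sum]
  have hKinv : ∀ (a : G) (x y : X), K (a • x) (a • y) = K x y := by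
    intro a x y
    have hcomp : ∑ g : G, f ((a⁻¹ * g)⁻¹ • x) * (starRingEnd ℂ) (f ((a⁻¹ * g)⁻¹ • y))
        = ∑ g : G, f (g⁻¹ • x) * (starRingEnd ℂ) (f (g⁻¹ • y)) :=
      Equiv.sum_comp (Equiv.mulLeft a⁻¹) (fun g => f (g⁻¹ • x) * (starRingEnd ℂ) (f (g⁻¹ • y)))
    have hterm : ∀ g : G, f ((a⁻¹ * g)⁻¹ • x) * (starRingEnd ℂ) (f ((a⁻¹ * g)⁻¹ • y))
        = f (g⁻¹ • (a • x)) * (starRingEnd ℂ) (f (g⁻¹ • (a • y))) := by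
      intro g
      rw [mul_inv_rev, inv_inv, mul_smul, mul_smul]
    calc K (a • x) (a • y)
        = ∑ g : G, f ((a⁻¹ * g)⁻¹ • x) * (starRingEnd ℂ) (f ((a⁻¹ * g)⁻¹ • y)) :=
          (Finset.sum_congr rfl fun g _ => hterm g).symm
      _ = K x y := hcomp
  have hKdiag : ∀ x : X, K x x = K x₀ x₀ := by
    intro x
    obtain ⟨y, hy⟩ := Fintype.exists_ne_of_one_lt_card (by omega) x
    obtain ⟨g, hg, -⟩ := h2 x y x₀ y₀ hy.symm hy₀.symm
    rw [← hg, hKinv]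
  have hKoff : ∀ x y : X, x ≠ y → K x y = K x₀ y₀ := by
    intro x y hxy
    obtain ⟨g, hg1, hg2⟩ := h2 x y x₀ y₀ hxy hy₀.symm
    rw [← hg1, ← hg2, hKinv]
  set α : ℂ := K x₀ x₀ with hα
  set β : ℂ := K x₀ y₀ with hβ
  have hKite : ∀ x y : X, K x y = if x = y then α else β := by
    intro x y
    by_cases hxy : x = y
    · subst hxy; simp [hKdiag x]
    · simp [hxy, hKoff x y hxy]
  have hdiag : (n : ℂ) * α = (m : ℂ) * (T : ℂ) := by
    have h1 : ∑ x : X, K x x = (n : ℂ) * α := by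
      rw [Finset.sum_congr rfl fun x _ => hKdiag x]
      simp [hn, mul_comm]
    have h2' : ∑ x : X, K x x = (m : ℂ) * (T : ℂ) := by
      have hg : ∀ g : G, ∑ x : X, f (g⁻¹ • x) * (starRingEnd ℂ) (f (g⁻¹ • x))
          = (T : ℂ) := by
        intro g
        have hre : ∑ x : X, f (g⁻¹ • x) * (starRingEnd ℂ) (f (g⁻¹ • x))
            = ∑ x : X, f x * (starRingEnd ℂ) (f x) :=
          Equiv.sum_comp (MulAction.toPerm (g⁻¹ : G)) (fun x => f x * (starRingEnd ℂ) (f x))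
        rw [hre, hT]
        push_cast
        exact Finset.sum_congr rfl fun x _ => (Complex.mul_conj (f x))
      calc ∑ x : X, K x x = ∑ g : G, ∑ x : X, f (g⁻¹ • x) * (starRingEnd ℂ) (f (g⁻¹ • x)) :=
            Finset.sum_comm
        _ = ∑ _g : G, (T : ℂ) := Finset.sum_congr rfl fun g _ => hg g
        _ = (m : ℂ) * (T : ℂ) := by simp [hm, mul_comm]
    rw [← h1, h2']
  have htot : ∑ x : X, ∑ y : X, K x y = (m : ℂ) * (S * (starRingEnd ℂ) S) := by
    have h1 : ∀ g : G, (∑ x : X, f (g⁻¹ • x)) = S := fun g =>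
      Equiv.sum_comp (MulAction.toPerm (g⁻¹ : G)) (fun x => f x)
    calc ∑ x : X, ∑ y : X, K x y
        = ∑ x : X, ∑ g : G, ∑ y : X, f (g⁻¹ • x) * (starRingEnd ℂ) (f (g⁻¹ • y)) :=
          Finset.sum_congr rfl fun x _ => Finset.sum_comm
      _ = ∑ g : G, ∑ x : X, ∑ y : X, f (g⁻¹ • x) * (starRingEnd ℂ) (f (g⁻¹ • y)) :=
          Finset.sum_comm
      _ = ∑ g : G, (∑ x : X, f (g⁻¹ • x)) * (starRingEnd ℂ) (∑ y : X, f (g⁻¹ • y)) := by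
          refine Finset.sum_congr rfl fun g _ => ?_
          rw [map_sum, Finset.sum_mul_sum]
      _ = (m : ℂ) * (S * (starRingEnd ℂ) S) := by
          rw [Finset.sum_congr rfl fun g _ => by rw [h1 g]]
          simp [hm, mul_comm]
  have htot2 : ∑ x : X, ∑ y : X, K x y = (n : ℂ) * α + ((n : ℂ) ^ 2 - n) * β := by
    have h1 : ∀ x : X, ∑ y : X, K x y = α + ((n : ℂ) - 1) * β := by
      intro x
      have hsplit : ∀ y : X, K x y = β + (if x = y then α - β else 0) := by
        intro y
        rw [hKite x y]
        split <;> ring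
      rw [Finset.sum_congr rfl fun y _ => hsplit y, Finset.sum_add_distrib,
        Finset.sum_const, Finset.sum_ite_eq Finset.univ x (fun _ => α - β)]
      simp [hn]
      ring
    rw [Finset.sum_congr rfl fun x _ => h1 x, Finset.sum_const]
    simp [hn]
    ring
  -- real part of hdiag
  have hdiag_re : (n : ℝ) * α.re = (m : ℝ) * T := by
    have := congrArg Complex.re hdiag
    simpa [Complex.mul_re] using this
  constructor
  · rintro ⟨A, hA, hAeq⟩
    -- test with constant-one vector
    have e1 := hAeq (WithLp.toLp 2 (fun _ => (1 : ℂ)))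
    rw [hmain, hnormsq] at e1
    simp only [map_one, one_mul, Complex.normSq_one, Finset.sum_const, Finset.card_univ,
      nsmul_eq_mul, mul_one] at e1
    -- e1 : (∑ x, ∑ y, K x y).re = A * n
    have e1' : (m : ℝ) * Complex.normSq S = A * n := by
      rw [← e1, htot, Complex.mul_conj]
      rw [show ((m : ℂ) * ((Complex.normSq S : ℝ) : ℂ)) = (((m * Complex.normSq S : ℝ)) : ℂ) by
        push_cast; ring]
      rw [Complex.ofReal_re]
    -- test with basis vectors
    have e2 : α.re = A := by
      have ex := hAeq (EuclideanSpace.single x₀ (1 : ℂ))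
      rw [hmain, hnormsq] at ex
      simp only [EuclideanSpace.single_apply, apply_ite, map_one, map_zero, ite_mul,
        mul_ite, zero_mul, mul_zero, one_mul, mul_one, Finset.sum_ite_eq, Finset.sum_ite_eq',
        Finset.mem_univ, if_true, Complex.normSq_one, Complex.normSq_zero] at ex
      rw [hα]
      simpa using ex
    rw [hRHS]
    have : (m : ℝ) * T = (m : ℝ) * Complex.normSq S := by
      rw [e1', ← hdiag_re, e2]
      ring
    have hmne : (m : ℝ) ≠ 0 := Nat.cast_ne_zero.mpr (by omega)
    have := mul_left_cancel₀ hmne this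
    linarith
  · intro hcond
    have hnst : Complex.normSq S = T := hRHS.mp hcond
    have hSc : S * (starRingEnd ℂ) S = (T : ℂ) := by
      rw [Complex.mul_conj, hnst]
    have hβ0 : β = 0 := by
      have heq : (n : ℂ) * α + ((n : ℂ) ^ 2 - n) * β = (n : ℂ) * α := by
        rw [← htot2, htot, hSc, hdiag]
      have h0 : ((n : ℂ) ^ 2 - n) * β = 0 := by linear_combination heq
      have hne : ((n : ℂ) ^ 2 - n) ≠ 0 := by
        have h1 : (n : ℂ) ≠ 0 := Nat.cast_ne_zero.mpr (by omega)
        have h2'' : (n : ℂ) - 1 ≠ 0 := by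
          rw [sub_ne_zero]
          intro hc
          have : n = 1 := by exact_mod_cast hc
          omega
        have : (n : ℂ) ^ 2 - n = (n : ℂ) * ((n : ℂ) - 1) := by ring
        rw [this]
        exact mul_ne_zero h1 h2''
      exact (mul_eq_zero.mp h0).resolve_left hne
    refine ⟨(m : ℝ) * T / n, by positivity, fun h => ?_⟩
    rw [hmain h]
    have collapse : ∀ x : X, ∑ y : X, (starRingEnd ℂ) (h x) * h y * K x y
        = (Complex.normSq (h x) : ℂ) * α := by
      intro x
      have term : ∀ y : X, (starRingEnd ℂ) (h x) * h y * K x y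
          = if x = y then (starRingEnd ℂ) (h x) * h y * α else 0 := by
        intro y
        rw [hKite x y, hβ0]
        split <;> ring
      rw [Finset.sum_congr rfl fun y _ => term y,
        Finset.sum_ite_eq Finset.univ x (fun y => (starRingEnd ℂ) (h x) * h y * α)]
      simp only [Finset.mem_univ, if_true]
      rw [mul_comm ((starRingEnd ℂ) (h x)) (h x), Complex.mul_conj]
    rw [Finset.sum_congr rfl fun x _ => collapse x, ← Finset.sum_mul, ← Complex.ofReal_sum]
    have hαre : α.re = (m : ℝ) * T / n := by
      field_simp
      rw [mul_comm]
      exact hdiag_re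
    rw [hnormsq h]
    simp [Complex.mul_re, hαre]
    ring
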